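/- Nudged-state derivative equals the block multiplier (induction step): let Ẽ : ℝⁿ × ℝᵖ × ℝ^m × ℝ^q → ℝ be twice continuously differentiable, let s⋆ satisfy ∇₁Ẽ(s⋆, θ, u, ω) = 0 with H := ∇₁²Ẽ(s⋆, θ, u, ω) invertible, fix δ ∈ ℝⁿ, and suppose β ↦ s_β is differentiable at 0 with s₀ = s⋆ and β δ + ∇₁Ẽ(s_β, θ, u, ω) = 0 for all β near 0. If λ ∈ ℝⁿ satisfies δ + H·λ = 0, then d/dβ s_β |_{β=0} = λ. -/

import Mathlib

open scoped RealInnerProductSpace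

noncomputable section

abbrev Euc (n : ℕ) := EuclideanSpace ℝ (Fin n)

/-- Nudged-state derivative equals the block multiplier: if
`β δ + ∇₁Ẽ(s_β, θ, u, ω) = 0` near 0, `s₀ = s⋆`, `H = ∇₁²Ẽ(s⋆,…)` invertible, and
`δ + H·λ = 0`, then `d/dβ s_β|₀ = λ`. -/
theorem stmt_12 {n p m q : ℕ}
    (Et : Euc n → Euc p → Euc m → Euc q → ℝ)
    (hEt : ContDiff ℝ 2
      (fun t : Euc n × Euc p × Euc m × Euc q => Et t.1 t.2.1 t.2.2.1 t.2.2.2))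
    (θ : Euc p) (u : Euc m) (ω : Euc q) (sstar : Euc n)
    (hcrit : gradient (fun s' => Et s' θ u ω) sstar = 0)
    (H Hinv : Euc n →L[ℝ] Euc n)
    (hH : H = fderiv ℝ (fun s' => gradient (fun s'' => Et s'' θ u ω) s') sstar)
    (h1 : Hinv.comp H = ContinuousLinearMap.id ℝ (Euc n))
    (h2 : H.comp Hinv = ContinuousLinearMap.id ℝ (Euc n))
    (δ : Euc n) (s : ℝ → Euc n) (hs : DifferentiableAt ℝ s 0) (hs0 : s 0 = sstar)
    (ε : ℝ) (hε : 0 < ε)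
    (hnudge : ∀ β ∈ Set.Ioo (-ε) ε,
      β • δ + gradient (fun s' => Et s' θ u ω) (s β) = 0)
    (lam : Euc n) (hlam : δ + H lam = 0) :
    deriv s 0 = lam := by
  set F : Euc n → ℝ := fun s' => Et s' θ u ω with hFdef
  have hF : ContDiff ℝ 2 F := by
    have : ContDiff ℝ 2 (fun s' : Euc n => (s', θ, u, ω)) :=
      contDiff_id.prodMk (contDiff_const.prodMk (contDiff_const.prodMk contDiff_const))
    exact hEt.comp this
  set G : Euc n → Euc n := fun s' => gradient F s' with hGdef
  have hGeq : G = fun s' => (InnerProductSpace.toDual ℝ (Euc n)).symm (fderiv ℝ F s') := rfl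
  have hfd : Differentiable ℝ (fderiv ℝ F) :=
    (hF.fderiv_right (m := 1) (by norm_num)).differentiable one_ne_zero
  have hGdiff : Differentiable ℝ G := by
    rw [hGeq]
    exact fun x =>
      ((InnerProductSpace.toDual ℝ (Euc n)).symm.differentiableAt).comp x (hfd x)
  -- the composed curve
  have hcomp : HasDerivAt (fun β => G (s β)) (fderiv ℝ G sstar (deriv s 0)) 0 := by
    have h1' : HasFDerivAt G (fderiv ℝ G sstar) (s 0) := by
      rw [hs0]; exact (hGdiff sstar).hasFDerivAt
    exact h1'.comp_hasDerivAt 0 hs.hasDerivAt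
  have hlin : HasDerivAt (fun β : ℝ => β • δ) δ 0 := by
    simpa using (hasDerivAt_id (0 : ℝ)).smul_const δ
  have hφ : HasDerivAt (fun β => β • δ + G (s β)) (δ + fderiv ℝ G sstar (deriv s 0)) 0 :=
    hlin.add hcomp
  have hzero : (fun β => β • δ + G (s β)) =ᶠ[nhds (0 : ℝ)] (fun _ => (0 : Euc n)) := by
    have hmem : Set.Ioo (-ε) ε ∈ nhds (0 : ℝ) :=
      Ioo_mem_nhds (by linarith) hε
    exact Filter.eventuallyEq_of_mem hmem fun β hβ => hnudge β hβ
  have hφ0 : HasDerivAt (fun _ : ℝ => (0 : Euc n)) (δ + fderiv ℝ G sstar (deriv s 0)) 0 :=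
    hφ.congr_of_eventuallyEq hzero.symm
  have hd0 : δ + fderiv ℝ G sstar (deriv s 0) = 0 := by
    have := hφ0.deriv
    simpa using this.symm
  have hHd : δ + H (deriv s 0) = 0 := by rw [hH]; exact hd0
  have : H (deriv s 0) = H lam := by
    have h3 : H (deriv s 0) = -δ := by
      have := hHd; linear_combination (norm := abel) this
    have h4 : H lam = -δ := by linear_combination (norm := abel) hlam
    rw [h3, h4]
  calc deriv s 0 = Hinv (H (deriv s 0)) := by
        rw [← ContinuousLinearMap.comp_apply, h1]; rfl
    _ = Hinv (H lam) := by rw [this]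
    _ = lam := by rw [← ContinuousLinearMap.comp_apply, h1]; rfl
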